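/- arXiv:2106.00975 — 2 statements merged into one kernel-verified Lean document; each statement's English description precedes it below -/
import Mathlib

section
/- Let $\mathcal{X}=(x_n)$ be a basis of a Banach space $\mathbb{X}$ such that $\mathbb{X}^*$ is a GT space with GT constant $C_g$, and suppose $\mathcal{X}$ is $p$-Hilbertian for some $1\le p<2$ with constant $C_p$ and its multiplier operators satisfy $\|M_\varepsilon\|\le C_t|A|^t$ for all finite $A$ and unimodular $\varepsilon\in\mathcal{E}_A$, where $0<t<1/2$. Let $s=2p/(3p-2)$. Then for every $h^*\in\mathbb{X}^*$ and every finite $A\subseteq\mathbb{N}$ with $|A|=m$, $(\sum_{n\in A}|h^*(x_n)|^s)^{1/s}\le C_pC_tC_g\,m^t\|h^*\|$. -/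
open Finset Set
open scoped ENNReal NNReal

noncomputable section

instance : Fact ((1 : ℝ≥0∞) ≤ 2) := ⟨one_le_two⟩

/-- A (Schauder-type) basis of a Banach space: a norm-bounded biorthogonal system
`(e, c)` whose linear span is dense. -/
structure BBasis (X : Type*) [NormedAddCommGroup X] [NormedSpace ℝ X] where
  e : ℕ → X
  c : ℕ → X →L[ℝ] ℝ
  biorth : ∀ m n, c m (e n) = if m = n then (1 : ℝ) else 0
  e_bdd : ∃ M, ∀ n, ‖e n‖ ≤ M
  c_bdd : ∃ M, ∀ n, ‖c n‖ ≤ M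
  dense_span : Dense (Submodule.span ℝ (Set.range e) : Set X)

namespace BBasis

variable {X : Type*} [NormedAddCommGroup X] [NormedSpace ℝ X] (B : BBasis X)

/-- Coordinate projection on a finite set `A`. -/
def S (A : Finset ℕ) (f : X) : X := ∑ n ∈ A, B.c n f • B.e n

/-- The set `𝒬` of vectors with coefficients in the unit ball of `ℓ∞`. -/
def inQ (f : X) : Prop := ∀ n, |B.c n f| ≤ 1

/-- `A` is the set `A(a,f) = {n : |c n f| ≥ a}`. -/
def thrSet (a : ℝ) (f : X) (A : Finset ℕ) : Prop := ∀ n, n ∈ A ↔ a ≤ |B.c n f|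

/-- `A` is a greedy set of `f`. -/
def greedySet (f : X) (A : Finset ℕ) : Prop :=
  ∀ n ∈ A, ∀ k, k ∉ A → |B.c k f| ≤ |B.c n f|

/-- The restricted truncation operator associated with a finite set `A`. -/
def R (A : Finset ℕ) (f : X) : X :=
  if h : A.Nonempty then
    (A.inf' h fun n => |B.c n f|) • ∑ n ∈ A, Real.sign (B.c n f) • B.e n
  else 0

/-- The basis is truncation quasi-greedy. -/
def TruncationQG : Prop :=
  ∃ C : ℝ, ∀ f (A : Finset ℕ), B.greedySet f A → ‖B.R A f‖ ≤ C * ‖f‖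

/-- The basis is equivalent to the unit vector basis of `c₀`. -/
def EquivC0 : Prop :=
  ∃ c C : ℝ, 0 < c ∧ ∀ (A : Finset ℕ) (hA : A.Nonempty) (a : ℕ → ℝ),
    c * (A.sup' hA fun n => |a n|) ≤ ‖∑ n ∈ A, a n • B.e n‖ ∧
    ‖∑ n ∈ A, a n • B.e n‖ ≤ C * (A.sup' hA fun n => |a n|)

end BBasis

/-- A Banach space `Y` is a GT space: every bounded operator `T : Y → ℓ₂` is
absolutely summing. -/
def IsGTSpace (Y : Type*) [NormedAddCommGroup Y] [NormedSpace ℝ Y] : Prop :=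
  ∀ T : Y →L[ℝ] lp (fun _ : ℕ => ℝ) 2, ∃ C : ℝ,
    ∀ (A : Finset ℕ) (g : ℕ → Y) (M : ℝ),
      (∀ ε : ℕ → ℝ, (∀ k ∈ A, |ε k| = 1) → ‖∑ k ∈ A, ε k • g k‖ ≤ M) →
      ∑ k ∈ A, ‖T (g k)‖ ≤ C * M

namespace Stmt15Aux

lemma smul_single (n : ℕ) (x : ℝ) :
    x • lp.single (E := fun _ : ℕ => ℝ) 2 n (1 : ℝ) = lp.single 2 n x := by
  ext j
  rw [lp.coeFn_smul]
  simp [lp.single_apply]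
  by_cases hj : j = n <;> simp [hj]

lemma single_zero (n : ℕ) : lp.single (E := fun _ : ℕ => ℝ) 2 n (0 : ℝ) = 0 := by
  ext j; simp [lp.single_apply]

lemma norm_single (n : ℕ) (x : ℝ) :
    ‖lp.single (E := fun _ : ℕ => ℝ) 2 n x‖ = |x| := by
  have := lp.norm_single (p := 2) (E := fun _ : ℕ => ℝ) (by norm_num) n x
  simpa using this

lemma norm_sum_single (A : Finset ℕ) (f : ℕ → ℝ) :
    ‖∑ n ∈ A, lp.single (E := fun _ : ℕ => ℝ) 2 n (f n)‖ ^ (2:ℝ) = ∑ n ∈ A, |f n| ^ (2:ℝ) := by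
  have := lp.norm_sum_single (p := 2) (E := fun _ : ℕ => ℝ) (by norm_num) f A
  simpa using this

variable {X : Type*} [NormedAddCommGroup X] [NormedSpace ℝ X]

/-- The operator `g ↦ (a n * g (e n))_{n ∈ A}` as a map `X* → ℓ₂`. -/
def Top (A : Finset ℕ) (a : ℕ → ℝ) (e : ℕ → X) :
    (X →L[ℝ] ℝ) →L[ℝ] lp (fun _ : ℕ => ℝ) 2 :=
  ∑ n ∈ A, a n • ((ContinuousLinearMap.apply ℝ ℝ (e n)).smulRight
    (lp.single (E := fun _ : ℕ => ℝ) 2 n (1 : ℝ)))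

lemma Top_apply (A : Finset ℕ) (a : ℕ → ℝ) (e : ℕ → X) (g : X →L[ℝ] ℝ) :
    Top A a e g = ∑ n ∈ A, lp.single 2 n (a n * g (e n)) := by
  rw [Top, ContinuousLinearMap.sum_apply]
  refine Finset.sum_congr rfl fun n _ => ?_
  rw [ContinuousLinearMap.smul_apply, ContinuousLinearMap.smulRight_apply]
  rw [show (ContinuousLinearMap.apply ℝ ℝ (e n)) g = g (e n) from rfl]
  rw [smul_smul, smul_single]

end Stmt15Aux

/-- let `B` be a basis of a Banach space `X` whose dual is a GT space
with GT constant `Cg`, which is `p`-Hilbertian (`1 ≤ p < 2`) with constant `Cp`, and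
whose multipliers satisfy `‖M_ε‖ ≤ Ct |A|^t`, `0 < t < 1/2`.  With `s = 2p/(3p-2)`,
for every `h* ∈ X*` and finite `A` with `|A| = m`,
`(∑_{n∈A} |h*(e n)|^s)^{1/s} ≤ Cp Ct Cg m^t ‖h*‖`. -/
theorem stmt15 {X : Type*} [NormedAddCommGroup X] [NormedSpace ℝ X] [CompleteSpace X]
    (B : BBasis X) (p t Cp Ct Cg : ℝ)
    (hp1 : 1 ≤ p) (hp2 : p < 2) (ht0 : 0 < t) (ht : t < 1 / 2)
    (hGT : ∀ T : (X →L[ℝ] ℝ) →L[ℝ] lp (fun _ : ℕ => ℝ) 2,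
      ∀ (A : Finset ℕ) (g : ℕ → (X →L[ℝ] ℝ)) (M : ℝ),
        (∀ ε : ℕ → ℝ, (∀ k ∈ A, |ε k| = 1) → ‖∑ k ∈ A, ε k • g k‖ ≤ M) →
        ∑ k ∈ A, ‖T (g k)‖ ≤ Cg * ‖T‖ * M)
    (hCp : ∀ (A : Finset ℕ) (a : ℕ → ℝ),
      ‖∑ n ∈ A, a n • B.e n‖ ≤ Cp * (∑ n ∈ A, |a n| ^ p) ^ (1 / p))
    (hM : ∀ (A : Finset ℕ) (ε : ℕ → ℝ) (f : X), (∀ n ∈ A, |ε n| = 1) →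
      ‖∑ n ∈ A, (ε n * B.c n f) • B.e n‖ ≤ Ct * (A.card : ℝ) ^ t * ‖f‖) :
    ∀ (hs : X →L[ℝ] ℝ) (A : Finset ℕ),
      (∑ n ∈ A, |hs (B.e n)| ^ (2 * p / (3 * p - 2))) ^ (1 / (2 * p / (3 * p - 2))) ≤
        Cp * Ct * Cg * (A.card : ℝ) ^ t * ‖hs‖ := by
  classical
  intro h A
  set sp := 2 * p / (3 * p - 2) with hsp_def
  have hp0 : (0:ℝ) < p := by linarith
  have h2p : (0:ℝ) < 2 - p := by linarith
  have h3p : (0:ℝ) < 3 * p - 2 := by linarith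
  set r := 2 * p / (2 - p) with hr_def
  have hr0 : 0 < r := div_pos (by linarith) h2p
  have hsp0 : 0 < sp := div_pos (by linarith) h3p
  have hsp1 : 1 < sp := by rw [hsp_def, lt_div_iff₀ h3p]; linarith
  have hconj : 1 / sp + 1 / r = 1 := by rw [hsp_def, hr_def]; field_simp; ring
  have hsr : (sp - 1) * r = sp := by
    rw [hsp_def, hr_def, div_sub_one h3p.ne', div_mul_div_comm,
      div_eq_div_iff (mul_pos h3p h2p).ne' h3p.ne']; ring
  have hbio : B.c 0 (B.e 0) = 1 := by simpa using B.biorth 0 0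
  have he0 : (0:ℝ) < ‖B.e 0‖ := by
    rcases eq_or_ne (B.e 0) 0 with h0 | h0
    · rw [h0] at hbio; simp at hbio
    · exact norm_pos_iff.mpr h0
  have hCp0 : 0 < Cp := by
    have h1 := hCp {0} (fun _ => 1)
    simp [Real.one_rpow] at h1
    linarith
  have hCt1 : (1:ℝ) ≤ Ct := by
    have h1 := hM {0} (fun _ => 1) (B.e 0) (by intro n _; simp)
    simp [hbio, Real.one_rpow] at h1
    nlinarith
  have hCg0 : 0 < Cg := by
    set T0 : (X →L[ℝ] ℝ) →L[ℝ] lp (fun _ : ℕ => ℝ) 2 :=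
      (ContinuousLinearMap.apply ℝ ℝ (B.e 0)).smulRight
        (lp.single (E := fun _ : ℕ => ℝ) 2 0 (1:ℝ)) with hT0
    have hcond : ∀ ε : ℕ → ℝ, (∀ k ∈ ({0} : Finset ℕ), |ε k| = 1) →
        ‖∑ k ∈ ({0} : Finset ℕ), ε k • (fun _ => B.c 0) k‖ ≤ ‖B.c 0‖ := by
      intro ε hε
      rw [Finset.sum_singleton]
      have hε0 := hε 0 (Finset.mem_singleton_self 0)
      exact le_trans (le_of_eq (norm_smul (ε 0) (B.c 0)))
        (by rw [Real.norm_eq_abs, hε0, one_mul])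
    have h1 := hGT T0 {0} (fun _ => B.c 0) ‖B.c 0‖ hcond
    rw [Finset.sum_singleton] at h1
    have hT0c : T0 (B.c 0) = lp.single 2 0 (1:ℝ) := by
      rw [hT0, ContinuousLinearMap.smulRight_apply]
      rw [show (ContinuousLinearMap.apply ℝ ℝ (B.e 0)) (B.c 0) = B.c 0 (B.e 0) from rfl,
        hbio, one_smul]
    rw [hT0c, Stmt15Aux.norm_single, abs_one] at h1
    have h2 : (0:ℝ) ≤ ‖T0‖ := norm_nonneg T0
    have h3 : (0:ℝ) ≤ ‖B.c 0‖ := norm_nonneg _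
    by_contra hc
    push_neg at hc
    have h4 : Cg * ‖T0‖ * ‖B.c 0‖ ≤ 0 :=
      mul_nonpos_of_nonpos_of_nonneg (mul_nonpos_of_nonpos_of_nonneg hc h2) h3
    linarith
  have hcard : (0:ℝ) ≤ (A.card:ℝ) ^ t := Real.rpow_nonneg (Nat.cast_nonneg _) t
  set S := ∑ n ∈ A, |h (B.e n)| ^ sp with hS_def
  have hS0 : 0 ≤ S := Finset.sum_nonneg fun n _ => Real.rpow_nonneg (abs_nonneg _) _
  rcases hS0.eq_or_lt with hS | hS
  · rw [← hS, Real.zero_rpow (show (1/sp) ≠ 0 by positivity)]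
    exact mul_nonneg (mul_nonneg (mul_nonneg (mul_nonneg hCp0.le (by linarith)) hCg0.le)
      hcard) (norm_nonneg _)
  · set a : ℕ → ℝ := fun n => |h (B.e n)| ^ (sp - 1) with ha_def
    have ha : ∀ n, 0 ≤ a n := fun n => Real.rpow_nonneg (abs_nonneg _) _
    have haS : ∑ n ∈ A, a n ^ r = S := by
      refine Finset.sum_congr rfl fun n _ => ?_
      rw [ha_def]
      rw [← Real.rpow_mul (abs_nonneg _), hsr]
    set T := Stmt15Aux.Top A a B.e with hT_def
    have hQ0 : 0 < S ^ (1/r) := Real.rpow_pos_of_pos hS _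
    have hTnorm : ‖T‖ ≤ Cp * S ^ (1/r) := by
      refine ContinuousLinearMap.opNorm_le_bound _ (mul_nonneg hCp0.le hQ0.le) fun g => ?_
      set σ := ‖T g‖ with hσ_def
      have hσ0 : 0 ≤ σ := norm_nonneg _
      have h2σ : σ ^ (2:ℝ) = ∑ n ∈ A, |a n * g (B.e n)| ^ (2:ℝ) := by
        rw [hσ_def, hT_def, Stmt15Aux.Top_apply]
        exact Stmt15Aux.norm_sum_single A _
      set u := ∑ n ∈ A, (a n * (a n * g (B.e n))) • B.e n with hu_def
      have hgu : σ ^ (2:ℝ) = g u := by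
        rw [h2σ, hu_def, map_sum]
        refine Finset.sum_congr rfl fun n _ => ?_
        rw [map_smul, smul_eq_mul]
        rw [show |a n * g (B.e n)| ^ (2:ℝ) = |a n * g (B.e n)| ^ (2:ℕ) by
          rw [← Real.rpow_natCast]; norm_num]
        rw [sq_abs]; ring
      have hub : ‖u‖ ≤ Cp * (∑ n ∈ A, |a n * (a n * g (B.e n))| ^ p) ^ (1/p) := by
        rw [hu_def]; exact hCp A _
      have hconj2 : Real.HolderConjugate (2/p) (2/(2-p)) := by
        rw [Real.holderConjugate_iff]
        constructor
        · rw [lt_div_iff₀ hp0]; linarith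
        · field_simp; ring
      have hhold : ∑ n ∈ A, |a n * (a n * g (B.e n))| ^ p ≤ σ ^ p * S ^ ((2-p)/2) := by
        have step1 : ∀ n ∈ A, |a n * (a n * g (B.e n))| ^ p
            = (|a n * g (B.e n)| ^ p) * (a n ^ p) := by
          intro n _
          rw [abs_mul, abs_of_nonneg (ha n), Real.mul_rpow (ha n) (abs_nonneg _)]
          ring
        rw [Finset.sum_congr rfl step1]
        have H := Real.inner_le_Lp_mul_Lq_of_nonneg A
          (f := fun n => |a n * g (B.e n)| ^ p) (g := fun n => a n ^ p) hconj2
          (fun n _ => Real.rpow_nonneg (abs_nonneg _) _)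
          (fun n _ => Real.rpow_nonneg (ha n) _)
        have e1 : ∀ n ∈ A, ((fun n => |a n * g (B.e n)| ^ p) n) ^ (2/p)
            = |a n * g (B.e n)| ^ (2:ℝ) := by
          intro n _
          rw [← Real.rpow_mul (abs_nonneg _)]
          congr 1
          field_simp
        have e2 : ∀ n ∈ A, ((fun n => a n ^ p) n) ^ (2/(2-p)) = a n ^ r := by
          intro n _
          rw [← Real.rpow_mul (ha n)]
          congr 1
          rw [hr_def]; field_simp
        rw [Finset.sum_congr rfl e1, Finset.sum_congr rfl e2, ← h2σ, haS,
          one_div_div, one_div_div] at H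
        have e3 : (σ ^ (2:ℝ)) ^ (p/2) = σ ^ p := by
          rw [← Real.rpow_mul hσ0]; congr 1; ring
        rw [e3] at H
        exact H
      have hfin : σ ^ (2:ℝ) ≤ ‖g‖ * (Cp * (σ * S ^ (1/r))) := by
        calc σ ^ (2:ℝ) = g u := hgu
        _ ≤ ‖g‖ * ‖u‖ := le_trans (Real.le_norm_self _) (g.le_opNorm u)
        _ ≤ ‖g‖ * (Cp * (∑ n ∈ A, |a n * (a n * g (B.e n))| ^ p) ^ (1/p)) :=
            mul_le_mul_of_nonneg_left hub (norm_nonneg g)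
        _ ≤ ‖g‖ * (Cp * (σ * S ^ (1/r))) := by
            refine mul_le_mul_of_nonneg_left (mul_le_mul_of_nonneg_left ?_ hCp0.le)
              (norm_nonneg g)
            have h4 : (∑ n ∈ A, |a n * (a n * g (B.e n))| ^ p) ^ (1/p)
                ≤ (σ ^ p * S ^ ((2-p)/2)) ^ (1/p) := by
              refine Real.rpow_le_rpow ?_ hhold (by positivity)
              exact Finset.sum_nonneg fun n _ => Real.rpow_nonneg (abs_nonneg _) _
            refine h4.trans_eq ?_
            rw [Real.mul_rpow (Real.rpow_nonneg hσ0 _) (Real.rpow_nonneg hS0 _)]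
            congr 1
            · rw [← Real.rpow_mul hσ0, mul_one_div_cancel hp0.ne', Real.rpow_one]
            · rw [← Real.rpow_mul hS0]
              congr 1
              rw [hr_def, one_div_div]; ring
      rcases hσ0.eq_or_lt with h0 | h0
      · rw [← h0]; exact mul_nonneg (mul_nonneg hCp0.le hQ0.le) (norm_nonneg g)
      · have h2σ' : σ * σ ≤ (Cp * S ^ (1/r) * ‖g‖) * σ := by
          calc σ * σ = σ ^ (2:ℝ) := by
                rw [show (2:ℝ) = ((2:ℕ):ℝ) by norm_num, Real.rpow_natCast]; ring
          _ ≤ ‖g‖ * (Cp * (σ * S ^ (1/r))) := hfin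
          _ = (Cp * S ^ (1/r) * ‖g‖) * σ := by ring
        exact le_of_mul_le_mul_right h2σ' h0
    set G : ℕ → (X →L[ℝ] ℝ) := fun k => h (B.e k) • B.c k with hG_def
    set M := Ct * (A.card:ℝ) ^ t * ‖h‖ with hM_def
    have hM0 : 0 ≤ M := mul_nonneg (mul_nonneg (by linarith) hcard) (norm_nonneg _)
    have hGM : ∀ ε : ℕ → ℝ, (∀ k ∈ A, |ε k| = 1) → ‖∑ k ∈ A, ε k • G k‖ ≤ M := by
      intro ε hε
      refine ContinuousLinearMap.opNorm_le_bound _ hM0 fun f => ?_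
      have heval : (∑ k ∈ A, ε k • G k) f = h (∑ k ∈ A, (ε k * B.c k f) • B.e k) := by
        rw [map_sum, ContinuousLinearMap.sum_apply]
        refine Finset.sum_congr rfl fun k _ => ?_
        simp only [hG_def, ContinuousLinearMap.smul_apply, map_smul, smul_eq_mul]
        ring
      rw [heval, Real.norm_eq_abs]
      calc |h (∑ k ∈ A, (ε k * B.c k f) • B.e k)|
          ≤ ‖h‖ * ‖∑ k ∈ A, (ε k * B.c k f) • B.e k‖ := h.le_opNorm _
        _ ≤ ‖h‖ * (Ct * (A.card:ℝ) ^ t * ‖f‖) :=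
            mul_le_mul_of_nonneg_left (hM A ε f hε) (norm_nonneg h)
        _ = M * ‖f‖ := by rw [hM_def]; ring
    have hGTres := hGT T A G M hGM
    have hTGk : ∀ k ∈ A, ‖T (G k)‖ = |h (B.e k)| ^ sp := by
      intro k hk
      have hval : T (G k) = lp.single 2 k (a k * h (B.e k)) := by
        rw [hT_def, Stmt15Aux.Top_apply]
        rw [Finset.sum_eq_single_of_mem k hk]
        · have hbk : B.c k (B.e k) = 1 := by simpa using B.biorth k k
          have : (G k) (B.e k) = h (B.e k) := by
            simp only [hG_def, ContinuousLinearMap.smul_apply, smul_eq_mul, hbk, mul_one]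
          rw [this]
        · intro n hn hnk
          have : (G k) (B.e n) = 0 := by
            have hb := B.biorth k n
            rw [if_neg (fun hh => hnk hh.symm)] at hb
            simp only [hG_def, ContinuousLinearMap.smul_apply, smul_eq_mul, hb, mul_zero]
          rw [this, mul_zero, Stmt15Aux.single_zero]
      rw [hval, Stmt15Aux.norm_single, abs_mul, abs_of_nonneg (ha k)]
      show |h (B.e k)| ^ (sp - 1) * |h (B.e k)| = |h (B.e k)| ^ sp
      rcases eq_or_ne (h (B.e k)) 0 with hz | hz
      · rw [hz, abs_zero, Real.zero_rpow hsp0.ne',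
          Real.zero_rpow (sub_ne_zero.mpr hsp1.ne'), zero_mul]
      · rw [← Real.rpow_add_one (abs_ne_zero.mpr hz) (sp - 1)]
        norm_num
    rw [Finset.sum_congr rfl hTGk, ← hS_def] at hGTres
    have hfinal : S ≤ (Cp * Ct * Cg * (A.card:ℝ) ^ t * ‖h‖) * S ^ (1/r) := by
      calc S ≤ Cg * ‖T‖ * M := hGTres
      _ ≤ Cg * (Cp * S ^ (1/r)) * M := by
          exact mul_le_mul_of_nonneg_right (mul_le_mul_of_nonneg_left hTnorm hCg0.le) hM0
      _ = (Cp * Ct * Cg * (A.card:ℝ) ^ t * ‖h‖) * S ^ (1/r) := by rw [hM_def]; ring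
    have hSsplit : S ^ (1/sp) * S ^ (1/r) = S := by
      rw [← Real.rpow_add hS, hconj, Real.rpow_one]
    have h5 : S ^ (1/sp) * S ^ (1/r)
        ≤ (Cp * Ct * Cg * (A.card:ℝ) ^ t * ‖h‖) * S ^ (1/r) := by
      rw [hSsplit]; exact hfinal
    exact le_of_mul_le_mul_right h5 hQ0
end
end

section
/- Bidemocratic bases are truncation quasi-greedy: if $\mathcal{X}$ is a bidemocratic basis of a Banach space, then $\sup_m\|\mathcal{R}_m\|<\infty$. -/
open Finset Set
open scoped ENNReal NNReal

noncomputable section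

lemma keylem {X : Type*} [NormedAddCommGroup X] [NormedSpace ℝ X]
    (B : BBasis X) {C₀ : ℝ} (hC : 0 ≤ C₀)
    (hbid : ∀ (m : ℕ) (A A' : Finset ℕ), A.card ≤ m → A'.card ≤ m →
      ‖∑ k ∈ A, B.e k‖ * ‖∑ k ∈ A', B.c k‖ ≤ C₀ * m)
    (f : X) {a : ℝ} (ha : 0 ≤ a) (S : Finset ℕ)
    (hS : a * S.card ≤ ‖∑ n ∈ S, B.c n‖ * ‖f‖) :
    a * ‖∑ n ∈ S, B.e n‖ ≤ C₀ * ‖f‖ := by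
  rcases S.eq_empty_or_nonempty with h | h
  · simp [h]
    exact mul_nonneg hC (norm_nonneg f)
  · have hs : (0:ℝ) < S.card := Nat.cast_pos.2 (Finset.card_pos.mpr h)
    have h1 := hbid S.card S S le_rfl le_rfl
    have h2 := mul_le_mul_of_nonneg_left hS (norm_nonneg (∑ n ∈ S, B.e n))
    have h3 := mul_le_mul_of_nonneg_right h1 (norm_nonneg f)
    nlinarith [norm_nonneg f, norm_nonneg (∑ n ∈ S, B.e n), norm_nonneg (∑ n ∈ S, B.c n)]


/-- a bidemocratic basis of a Banach space is truncation quasi-greedy. -/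
theorem stmt16 {X : Type*} [NormedAddCommGroup X] [NormedSpace ℝ X] [CompleteSpace X]
    (B : BBasis X)
    (hbid : ∃ C : ℝ, ∀ (m : ℕ) (A A' : Finset ℕ), A.card ≤ m → A'.card ≤ m →
      ‖∑ k ∈ A, B.e k‖ * ‖∑ k ∈ A', B.c k‖ ≤ C * m) :
    B.TruncationQG := by
  obtain ⟨C₀, hbid⟩ := hbid
  have hC : 0 ≤ C₀ := by
    have := hbid 1 ∅ ∅ (by simp) (by simp)
    simpa using this
  refine ⟨2 * C₀, fun f A _hA => ?_⟩
  have hnn : 0 ≤ 2 * C₀ * ‖f‖ := by positivity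
  unfold BBasis.R
  split_ifs with h
  · set a := A.inf' h fun n => |B.c n f| with ha_def
    have ha0 : 0 ≤ a := Finset.le_inf' h _ (fun n _ => abs_nonneg _)
    by_cases haz : a = 0
    · simp [haz, hnn]
    · have hapos : 0 < a := lt_of_le_of_ne ha0 (Ne.symm haz)
      have hle : ∀ n ∈ A, a ≤ |B.c n f| := fun n hn => Finset.inf'_le _ hn
      set P := A.filter (fun n => 0 < B.c n f) with hP_def
      set N := A.filter (fun n => ¬ 0 < B.c n f) with hN_def
      have hNneg : ∀ n ∈ N, B.c n f < 0 := by
        intro n hn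
        rw [hN_def, Finset.mem_filter] at hn
        rcases lt_trichotomy (B.c n f) 0 with hl | hl | hl
        · exact hl
        · exfalso; have := hle n hn.1; rw [hl] at this; simp at this; linarith
        · exact absurd hl hn.2
      have hsplit : ∑ n ∈ A, Real.sign (B.c n f) • B.e n
          = (∑ n ∈ P, B.e n) - (∑ n ∈ N, B.e n) := by
        rw [← Finset.sum_filter_add_sum_filter_not A (fun n => 0 < B.c n f)]
        rw [sub_eq_add_neg, ← Finset.sum_neg_distrib]
        congr 1
        · exact Finset.sum_congr rfl fun n hn => by
            rw [Real.sign_of_pos (Finset.mem_filter.1 hn).2, one_smul]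
        · exact Finset.sum_congr rfl fun n hn => by
            rw [Real.sign_of_neg (hNneg n hn), neg_smul, one_smul]
      have evalP : a * P.card ≤ ‖∑ n ∈ P, B.c n‖ * ‖f‖ := by
        calc a * P.card = ∑ _n ∈ P, a := by rw [Finset.sum_const, nsmul_eq_mul, mul_comm]
          _ ≤ ∑ n ∈ P, B.c n f := Finset.sum_le_sum (fun n hn => by
              have h1 := hle n (Finset.mem_filter.1 hn).1
              have h2 := (Finset.mem_filter.1 hn).2
              rwa [abs_of_pos h2] at h1)
          _ = (∑ n ∈ P, B.c n) f := by rw [ContinuousLinearMap.sum_apply]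
          _ ≤ |(∑ n ∈ P, B.c n) f| := le_abs_self _
          _ ≤ ‖∑ n ∈ P, B.c n‖ * ‖f‖ := (∑ n ∈ P, B.c n).le_opNorm f
      have evalN : a * N.card ≤ ‖∑ n ∈ N, B.c n‖ * ‖f‖ := by
        calc a * N.card = ∑ _n ∈ N, a := by rw [Finset.sum_const, nsmul_eq_mul, mul_comm]
          _ ≤ ∑ n ∈ N, -(B.c n f) := Finset.sum_le_sum (fun n hn => by
              have h1 := hle n (Finset.mem_filter.1 hn).1
              have h2 := hNneg n hn
              rwa [abs_of_neg h2] at h1)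
          _ = -((∑ n ∈ N, B.c n) f) := by rw [ContinuousLinearMap.sum_apply, Finset.sum_neg_distrib]
          _ ≤ |(∑ n ∈ N, B.c n) f| := neg_le_abs _
          _ ≤ ‖∑ n ∈ N, B.c n‖ * ‖f‖ := (∑ n ∈ N, B.c n).le_opNorm f
      have kP := keylem B hC hbid f ha0 P evalP
      have kN := keylem B hC hbid f ha0 N evalN
      rw [hsplit, norm_smul, Real.norm_eq_abs, abs_of_pos hapos]
      calc a * ‖(∑ n ∈ P, B.e n) - (∑ n ∈ N, B.e n)‖
          ≤ a * (‖∑ n ∈ P, B.e n‖ + ‖∑ n ∈ N, B.e n‖) :=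
            mul_le_mul_of_nonneg_left (norm_sub_le _ _) ha0
        _ = a * ‖∑ n ∈ P, B.e n‖ + a * ‖∑ n ∈ N, B.e n‖ := by ring
        _ ≤ C₀ * ‖f‖ + C₀ * ‖f‖ := add_le_add kP kN
        _ = 2 * C₀ * ‖f‖ := by ring
  · simpa using hnn
end
end
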